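/- Let a, b > 1 be real numbers with log(a)/log(b) irrational, h_n = a^{−n}, k_n = b^{−n}. If f(0) = 0, f(h_n)/h_n → R and f(−k_n)/(−k_n) → L with R, L real, then every real number between L and R is a sequential cord derivative of f at 0 (a limit of (f(h_{i_n}) − f(−k_{j_n}))/(h_{i_n} + k_{j_n}) along subsequences). -/

import Mathlib

open Filter Topology

private lemma dense_pair (α : ℝ) (hirr : Irrational α) :
    Dense ((AddSubgroup.closure {1, α} : AddSubgroup ℝ) : Set ℝ) := by
  rcases (AddSubgroup.closure ({1, α} : Set ℝ)).dense_or_cyclic with h | ⟨g, hg⟩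
  · exact h
  · exfalso
    have h1 : (1 : ℝ) ∈ AddSubgroup.closure ({1, α} : Set ℝ) :=
      AddSubgroup.subset_closure (by simp)
    have h2 : α ∈ AddSubgroup.closure ({1, α} : Set ℝ) :=
      AddSubgroup.subset_closure (by simp)
    rw [hg, AddSubgroup.mem_closure_singleton] at h1 h2
    obtain ⟨n, hn⟩ := h1
    obtain ⟨m, hm⟩ := h2
    have hn0 : n ≠ 0 := by
      rintro rfl
      simp at hn
    have hnR : (n : ℝ) ≠ 0 := Int.cast_ne_zero.2 hn0
    refine hirr ⟨(m : ℚ) / n, ?_⟩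
    have hgn : g = 1 / (n : ℝ) := by
      rw [zsmul_eq_mul] at hn
      field_simp
      linarith [hn]
    rw [zsmul_eq_mul, hgn] at hm
    push_cast
    rw [← hm]
    ring

private lemma exists_small (α ε : ℝ) (hα : 0 < α) (hirr : Irrational α)
    (hε : 0 < ε) (hε1 : ε < 1) (hεα : ε < α) :
    ∃ p q : ℕ, 0 < p ∧ 0 < (p : ℝ) * α - q ∧ (p : ℝ) * α - q < ε := by
  suffices h : ∃ P Q : ℤ, 0 < P ∧ 0 < (P : ℝ) * α - Q ∧ (P : ℝ) * α - Q < ε by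
    obtain ⟨P, Q, hP, h1, h2⟩ := h
    have hQ : 0 ≤ Q := by
      by_contra hQ
      push_neg at hQ
      have hQ' : (Q : ℝ) ≤ -1 := by exact_mod_cast Int.le_sub_one_of_lt hQ -- Q < 0 → Q ≤ -1
      have hP1 : (1 : ℝ) ≤ P := by exact_mod_cast hP
      nlinarith
    have hPc : ((P.toNat : ℕ) : ℝ) = (P : ℝ) := by
      rw [← Int.cast_natCast, Int.toNat_of_nonneg hP.le]
    have hQc : ((Q.toNat : ℕ) : ℝ) = (Q : ℝ) := by
      rw [← Int.cast_natCast, Int.toNat_of_nonneg hQ]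
    refine ⟨P.toNat, Q.toNat, by omega, ?_, ?_⟩
    · rwa [hPc, hQc]
    · rwa [hPc, hQc]
  obtain ⟨s, hsS, hs1, hs2⟩ := (dense_pair α hirr).exists_between (half_lt_self hε)
  have hs0 : 0 < s := lt_trans (half_pos hε) hs1
  rw [SetLike.mem_coe, AddSubgroup.mem_closure_pair] at hsS
  obtain ⟨m, n, hmn⟩ := hsS
  rw [zsmul_eq_mul, zsmul_eq_mul, mul_one] at hmn
  have hn0 : n ≠ 0 := by
    rintro rfl
    rw [Int.cast_zero, zero_mul, add_zero] at hmn
    subst hmn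
    have : (1 : ℤ) ≤ m := by exact_mod_cast hs0
    have : (1 : ℝ) ≤ m := by exact_mod_cast this
    linarith
  rcases lt_or_gt_of_ne hn0 with hn | hn
  · -- n < 0 : use k = ⌊1/s⌋, element 1 - k * s
    have hsirr : Irrational s := by
      rw [← hmn]
      exact (hirr.intCast_mul hn0).intCast_add m
    set k := ⌊1 / s⌋ with hk
    have hk1 : 1 ≤ k := by
      rw [hk, Int.le_floor]
      rw [Int.cast_one, le_div_iff₀ hs0]
      linarith
    have hkR : (1 : ℝ) ≤ k := by exact_mod_cast hk1
    have hks : (k : ℝ) * s ≤ 1 := by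
      have := Int.floor_le (1 / s)
      calc (k : ℝ) * s ≤ (1 / s) * s := by nlinarith
        _ = 1 := by field_simp
    have hksne : (k : ℝ) * s ≠ 1 := by
      intro hcon
      have hkne : (k : ℝ) ≠ 0 := by positivity
      have : s = ((k : ℚ)⁻¹ : ℚ) := by
        push_cast
        field_simp
        linarith [hcon]
      exact hsirr ⟨(k : ℚ)⁻¹, this.symm⟩
    have hlow : 0 < 1 - (k : ℝ) * s := by
      rcases lt_or_eq_of_le hks with h | h
      · linarith
      · exact absurd h hksne
    have hup : 1 - (k : ℝ) * s < ε := by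
      have := Int.sub_one_lt_floor (1 / s)
      have h2 : 1 / s - 1 < (k : ℝ) := this
      have h3 : 1 < ((k : ℝ) + 1) * s := by
        rw [add_mul]
        have : (1 / s) * s = 1 := by field_simp
        nlinarith
      nlinarith
    refine ⟨k * (-n), k * m - 1, ?_, ?_, ?_⟩
    · exact mul_pos (by omega) (by omega)
    · push_cast
      have : ((k : ℝ) * (-n)) * α - ((k : ℝ) * m - 1) = 1 - k * s := by
        linear_combination (-(k : ℝ)) * hmn
      linarith [this]
    · push_cast
      have : ((k : ℝ) * (-n)) * α - ((k : ℝ) * m - 1) = 1 - k * s := by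
        linear_combination (-(k : ℝ)) * hmn
      linarith [this]
  · -- n > 0 : use P = n, Q = -m
    refine ⟨n, -m, hn, ?_, ?_⟩
    · push_cast
      linarith [hmn]
    · push_cast
      linarith [hmn]

private lemma exists_nat_approx (α : ℝ) (hα : 0 < α) (hirr : Irrational α)
    (c ε : ℝ) (hε : 0 < ε) (N : ℕ) :
    ∃ i j : ℕ, N ≤ i ∧ N ≤ j ∧ |(i : ℝ) * α - j - c| < ε := by
  set ε' := min ε (min α 1) / 2 with hε'
  have hε'pos : 0 < ε' := half_pos (lt_min hε (lt_min hα one_pos))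
  have hε'ε : ε' < ε := by
    have : min ε (min α 1) ≤ ε := min_le_left _ _
    have : ε' ≤ ε / 2 := by rw [hε']; linarith
    linarith
  have hε'1 : ε' < 1 := by
    have h1 : min ε (min α 1) ≤ 1 := le_trans (min_le_right _ _) (min_le_right _ _)
    rw [hε']; linarith
  have hε'α : ε' < α := by
    have h1 : min ε (min α 1) ≤ α := le_trans (min_le_right _ _) (min_le_left _ _)
    rw [hε']; linarith
  obtain ⟨p, q, hp, hδ1, hδ2⟩ := exists_small α ε' hα hirr hε'pos hε'1 hε'α
  set δ := (p : ℝ) * α - q with hδ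
  set K : ℕ := N + ⌈|c|⌉₊ + 1 with hK
  have hcK : (N : ℝ) + 1 ≤ c + K := by
    have h1 : |c| ≤ (⌈|c|⌉₊ : ℝ) := Nat.le_ceil _
    have h2 : -|c| ≤ c := neg_abs_le c
    have h3 : (K : ℝ) = N + ⌈|c|⌉₊ + 1 := by rw [hK]; push_cast; ring
    rw [h3]; linarith
  have hcK0 : 0 < c + K := by
    have : (0 : ℝ) ≤ N := Nat.cast_nonneg N
    linarith
  set m : ℕ := ⌈(c + K) / δ⌉₊ with hm
  have hm1 : (c + K) / δ ≤ m := Nat.le_ceil _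
  have hm2 : (m : ℝ) < (c + K) / δ + 1 := Nat.ceil_lt_add_one (le_of_lt (div_pos hcK0 hδ1))
  have hmδ1 : c + K ≤ m * δ := by
    rw [div_le_iff₀ hδ1] at hm1
    linarith
  have hmδ2 : (m : ℝ) * δ < c + K + δ := by
    have := mul_lt_mul_of_pos_right hm2 hδ1
    rw [add_mul, one_mul, div_mul_cancel₀ _ (ne_of_gt hδ1)] at this
    linarith
  have hmN : N < m := by
    have h1 : (N : ℝ) + 1 ≤ (c + K) := hcK
    have h2 : (N : ℝ) + 1 ≤ (c + K) / δ := by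
      rw [le_div_iff₀ hδ1]
      nlinarith [hcK0, Nat.cast_nonneg (α := ℝ) N]
    have : (N : ℝ) < m := by linarith
    exact_mod_cast this
  refine ⟨m * p, m * q + K, ?_, ?_, ?_⟩
  · calc N ≤ m := le_of_lt hmN
      _ ≤ m * p := Nat.le_mul_of_pos_right m hp
  · calc N ≤ K := by omega
      _ ≤ m * q + K := Nat.le_add_left _ _
  · have heq : ((m * p : ℕ) : ℝ) * α - ((m * q + K : ℕ) : ℝ) - c = m * δ - K - c := by
      push_cast
      rw [hδ]
      ring
    rw [heq, abs_of_nonneg (by linarith)]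
    linarith

private lemma slope_tendsto (a b : ℝ) (ha : 1 < a) (hb : 1 < b) (f : ℝ → ℝ) (R L : ℝ)
    (hR : Tendsto (fun n : ℕ => f (1 / a ^ n) / (1 / a ^ n)) atTop (𝓝 R))
    (hL : Tendsto (fun n : ℕ => f (-(1 / b ^ n)) / (-(1 / b ^ n))) atTop (𝓝 L))
    (i j : ℕ → ℕ) (hi : StrictMono i) (hj : StrictMono j) (μ : ℝ)
    (hμ : Tendsto (fun n => 1 / (1 + Real.exp ((i n : ℝ) * Real.log a - (j n : ℝ) * Real.log b)))
      atTop (𝓝 μ)) :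
    Tendsto (fun n => (f (1 / a ^ i n) - f (-(1 / b ^ j n))) / (1 / a ^ i n + 1 / b ^ j n))
      atTop (𝓝 (μ * R + (1 - μ) * L)) := by
  have ha0 : (0 : ℝ) < a := lt_trans one_pos ha
  have hb0 : (0 : ℝ) < b := lt_trans one_pos hb
  have key : ∀ n, (f (1 / a ^ i n) - f (-(1 / b ^ j n))) / (1 / a ^ i n + 1 / b ^ j n)
      = (1 / (1 + Real.exp ((i n : ℝ) * Real.log a - (j n : ℝ) * Real.log b)))
          * (f (1 / a ^ i n) / (1 / a ^ i n))
        + (1 - 1 / (1 + Real.exp ((i n : ℝ) * Real.log a - (j n : ℝ) * Real.log b)))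
          * (f (-(1 / b ^ j n)) / (-(1 / b ^ j n))) := by
    intro n
    have e1 : Real.exp ((i n : ℝ) * Real.log a - (j n : ℝ) * Real.log b) = a ^ i n / b ^ j n := by
      rw [← Real.log_pow, ← Real.log_pow, Real.exp_sub,
        Real.exp_log (by positivity), Real.exp_log (by positivity)]
    rw [e1]
    have hA : (0 : ℝ) < a ^ i n := by positivity
    have hB : (0 : ℝ) < b ^ j n := by positivity
    have hAB : (0 : ℝ) < a ^ i n + b ^ j n := by positivity
    have hBA : (0 : ℝ) < b ^ j n + a ^ i n := by positivity
    have h1AB : 1 + a ^ i n / b ^ j n ≠ 0 := by positivity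
    rw [div_add_div _ _ (ne_of_gt hA) (ne_of_gt hB), div_div_eq_mul_div,
      show 1 + a ^ i n / b ^ j n = (b ^ j n + a ^ i n) / b ^ j n from by
        rw [add_div, div_self (ne_of_gt hB)],
      one_div_div]
    simp only [one_mul, mul_one, one_div, div_inv_eq_mul, div_neg]
    rw [div_eq_iff (ne_of_gt hBA)]
    field_simp
    ring
  have t1 : Tendsto (fun n => f (1 / a ^ i n) / (1 / a ^ i n)) atTop (𝓝 R) :=
    hR.comp hi.tendsto_atTop
  have t2 : Tendsto (fun n => f (-(1 / b ^ j n)) / (-(1 / b ^ j n))) atTop (𝓝 L) :=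
    hL.comp hj.tendsto_atTop
  exact Tendsto.congr (fun n => (key n).symm)
    ((hμ.mul t1).add ((tendsto_const_nhds.sub hμ).mul t2))

theorem exp_decay_irrational_all_cord_derivs (a b : ℝ) (ha : 1 < a) (hb : 1 < b)
    (hirr : Irrational (Real.log a / Real.log b))
    (f : ℝ → ℝ) (R L : ℝ) (hf0 : f 0 = 0)
    (hR : Tendsto (fun n : ℕ => f (1 / a ^ n) / (1 / a ^ n)) atTop (𝓝 R))
    (hL : Tendsto (fun n : ℕ => f (-(1 / b ^ n)) / (-(1 / b ^ n))) atTop (𝓝 L))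
    (K : ℝ) (hK1 : min L R ≤ K) (hK2 : K ≤ max L R) :
    ∃ i j : ℕ → ℕ, StrictMono i ∧ StrictMono j ∧
      Tendsto (fun n => (f (1 / a ^ i n) - f (-(1 / b ^ j n))) / (1 / a ^ i n + 1 / b ^ j n))
        atTop (𝓝 K) := by
  have hla0 : 0 < Real.log a := Real.log_pos ha
  have hlb0 : 0 < Real.log b := Real.log_pos hb
  set la := Real.log a with hla
  set lb := Real.log b with hlb
  have hα : 0 < la / lb := div_pos hla0 hlb0
  -- key approximation step
  have key : ∀ (N : ℕ) (c ε : ℝ), 0 < ε →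
      ∃ i j : ℕ, N ≤ i ∧ N ≤ j ∧ |(i : ℝ) * la - (j : ℝ) * lb - c| < ε := by
    intro N c ε hε
    obtain ⟨i, j, hiN, hjN, hij⟩ :=
      exists_nat_approx (la / lb) hα hirr (c / lb) (ε / lb) (div_pos hε hlb0) N
    refine ⟨i, j, hiN, hjN, ?_⟩
    have hX : (i : ℝ) * la - (j : ℝ) * lb - c = ((i : ℝ) * (la / lb) - j - c / lb) * lb := by
      field_simp
    rw [hX, abs_mul, abs_of_pos hlb0]
    calc |(i : ℝ) * (la / lb) - j - c / lb| * lb < (ε / lb) * lb :=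
          mul_lt_mul_of_pos_right hij hlb0
      _ = ε := div_mul_cancel₀ ε (ne_of_gt hlb0)
  -- building strictly monotone sequences
  have seq : ∀ c : ℕ → ℝ, ∃ i j : ℕ → ℕ, StrictMono i ∧ StrictMono j ∧
      ∀ n : ℕ, |(i n : ℝ) * la - (j n : ℝ) * lb - c n| < 1 / ((n : ℝ) + 1) := by
    intro c
    choose I J hIN hJN happ using key
    have hε : ∀ n : ℕ, (0 : ℝ) < 1 / ((n : ℝ) + 1) := fun n => by positivity
    let g : ℕ → ℕ × ℕ := fun n => Nat.rec (motive := fun _ => ℕ × ℕ)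
      (I 0 (c 0) (1 / ((0 : ℕ) + 1 : ℝ)) (hε 0), J 0 (c 0) (1 / ((0 : ℕ) + 1 : ℝ)) (hε 0))
      (fun m p =>
        (I (max p.1 p.2 + 1) (c (m + 1)) (1 / (((m + 1 : ℕ) : ℝ) + 1)) (hε (m + 1)),
         J (max p.1 p.2 + 1) (c (m + 1)) (1 / (((m + 1 : ℕ) : ℝ) + 1)) (hε (m + 1)))) n
    have hg : ∀ m : ℕ, g (m + 1) =
        (I (max (g m).1 (g m).2 + 1) (c (m + 1)) (1 / (((m + 1 : ℕ) : ℝ) + 1)) (hε (m + 1)),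
         J (max (g m).1 (g m).2 + 1) (c (m + 1)) (1 / (((m + 1 : ℕ) : ℝ) + 1)) (hε (m + 1))) :=
      fun m => rfl
    refine ⟨fun n => (g n).1, fun n => (g n).2, ?_, ?_, ?_⟩
    · apply strictMono_nat_of_lt_succ
      intro m
      have h := hIN (max (g m).1 (g m).2 + 1) (c (m + 1)) _ (hε (m + 1))
      calc (g m).1 < max (g m).1 (g m).2 + 1 := Nat.lt_succ_of_le (le_max_left _ _)
        _ ≤ (g (m + 1)).1 := by rw [hg m]; exact h
    · apply strictMono_nat_of_lt_succ
      intro m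
      have h := hJN (max (g m).1 (g m).2 + 1) (c (m + 1)) _ (hε (m + 1))
      calc (g m).2 < max (g m).1 (g m).2 + 1 := Nat.lt_succ_of_le (le_max_right _ _)
        _ ≤ (g (m + 1)).2 := by rw [hg m]; exact h
    · intro n
      cases n with
      | zero => exact happ 0 (c 0) _ (hε 0)
      | succ m => exact happ (max (g m).1 (g m).2 + 1) (c (m + 1)) _ (hε (m + 1))
  have h0 : Tendsto (fun n : ℕ => 1 / ((n : ℝ) + 1)) atTop (𝓝 0) :=
    tendsto_one_div_add_atTop_nhds_zero_nat
  have h1n : ∀ n : ℕ, 1 / ((n : ℝ) + 1) ≤ 1 := by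
    intro n
    rw [div_le_one (by positivity)]
    linarith [Nat.cast_nonneg (α := ℝ) n]
  -- constant target: lambda tendsto
  have hconst : ∀ (c : ℝ) (i j : ℕ → ℕ),
      (∀ n : ℕ, |(i n : ℝ) * la - (j n : ℝ) * lb - c| < 1 / ((n : ℝ) + 1)) →
      Tendsto (fun n => 1 / (1 + Real.exp ((i n : ℝ) * la - (j n : ℝ) * lb)))
        atTop (𝓝 (1 / (1 + Real.exp c))) := by
    intro c i j hbnd
    have h1 : Tendsto (fun n => ((i n : ℝ) * la - (j n : ℝ) * lb) - c) atTop (𝓝 0) :=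
      squeeze_zero_norm (fun n => (hbnd n).le) h0
    have hd : Tendsto (fun n => (i n : ℝ) * la - (j n : ℝ) * lb) atTop (𝓝 c) := by
      have h2 := h1.add_const c
      simp only [sub_add_cancel, zero_add] at h2
      exact h2
    have hexp : Tendsto (fun n => Real.exp ((i n : ℝ) * la - (j n : ℝ) * lb)) atTop
        (𝓝 (Real.exp c)) := (Real.continuous_exp.tendsto c).comp hd
    exact tendsto_const_nhds.div (tendsto_const_nhds.add hexp) (by positivity)
  rcases eq_or_ne K R with hKR | hKR
  · rcases eq_or_ne K L with hKL | hKL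
    · -- K = R = L : μ = 1/2
      obtain ⟨i, j, hi, hj, hbnd⟩ := seq (fun _ => 0)
      refine ⟨i, j, hi, hj, ?_⟩
      have hμt := hconst 0 i j hbnd
      have h := slope_tendsto a b ha hb f R L hR hL i j hi hj _ hμt
      have heq : 1 / (1 + Real.exp 0) * R + (1 - 1 / (1 + Real.exp 0)) * L = K := by
        rw [Real.exp_zero, ← hKR, ← hKL]; ring_nf
      rwa [heq] at h
    · -- K = R ≠ L : μ = 1
      obtain ⟨i, j, hi, hj, hbnd⟩ := seq (fun n => -(n : ℝ))
      refine ⟨i, j, hi, hj, ?_⟩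
      have hd : Tendsto (fun n => (i n : ℝ) * la - (j n : ℝ) * lb) atTop atBot := by
        apply tendsto_atBot_mono (g := fun n => (i n : ℝ) * la - (j n : ℝ) * lb)
          (f := fun n : ℕ => 1 + -(n : ℝ))
        · intro n
          have h1 := (abs_lt.1 (hbnd n)).2
          have := h1n n
          linarith
        · exact tendsto_atBot_add_const_left _ 1
            (tendsto_neg_atTop_atBot.comp tendsto_natCast_atTop_atTop)
      have hexp : Tendsto (fun n => Real.exp ((i n : ℝ) * la - (j n : ℝ) * lb)) atTop (𝓝 0) :=
        Real.tendsto_exp_atBot.comp hd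
      have hμt : Tendsto (fun n => 1 / (1 + Real.exp ((i n : ℝ) * la - (j n : ℝ) * lb)))
          atTop (𝓝 (1 / (1 + 0))) :=
        tendsto_const_nhds.div (tendsto_const_nhds.add hexp) (by norm_num)
      have h := slope_tendsto a b ha hb f R L hR hL i j hi hj _ hμt
      have heq : 1 / (1 + 0 : ℝ) * R + (1 - 1 / (1 + 0 : ℝ)) * L = K := by
        rw [← hKR]; norm_num
      rwa [heq] at h
  · rcases eq_or_ne K L with hKL | hKL
    · -- K = L ≠ R : μ = 0
      obtain ⟨i, j, hi, hj, hbnd⟩ := seq (fun n => (n : ℝ))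
      refine ⟨i, j, hi, hj, ?_⟩
      have hd : Tendsto (fun n => (i n : ℝ) * la - (j n : ℝ) * lb) atTop atTop := by
        apply tendsto_atTop_mono (f := fun n : ℕ => (n : ℝ) - 1)
        · intro n
          have h1 := (abs_lt.1 (hbnd n)).1
          have := h1n n
          linarith
        · exact tendsto_atTop_add_const_right _ (-1 : ℝ) tendsto_natCast_atTop_atTop
      have hexp : Tendsto (fun n => 1 + Real.exp ((i n : ℝ) * la - (j n : ℝ) * lb)) atTop atTop :=
        tendsto_atTop_add_const_left _ 1 (Real.tendsto_exp_atTop.comp hd)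
      have hμt : Tendsto (fun n => 1 / (1 + Real.exp ((i n : ℝ) * la - (j n : ℝ) * lb)))
          atTop (𝓝 0) := by
        simpa [one_div, Pi.inv_def] using hexp.inv_tendsto_atTop
      have h := slope_tendsto a b ha hb f R L hR hL i j hi hj _ hμt
      have heq : (0 : ℝ) * R + (1 - 0) * L = K := by rw [← hKL]; norm_num
      rwa [heq] at h
    · -- strict case
      have hRL : R ≠ L := by
        intro h
        apply hKL
        rw [h] at hK1 hK2
        simp only [min_self, max_self] at hK1 hK2
        exact le_antisymm hK2 hK1
      have ht0 : 0 < (R - K) / (K - L) := by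
        rcases le_total L R with h | h
        · have h1 : L ≤ K := by rw [min_eq_left h] at hK1; exact hK1
          have h2 : K ≤ R := by rw [max_eq_right h] at hK2; exact hK2
          exact div_pos (sub_pos.2 (h2.lt_of_ne hKR)) (sub_pos.2 ((Ne.symm hKL).lt_of_le h1))
        · have h1 : R ≤ K := by rw [min_eq_right h] at hK1; exact hK1
          have h2 : K ≤ L := by rw [max_eq_left h] at hK2; exact hK2
          have hx : R - K < 0 := sub_neg.2 ((Ne.symm hKR).lt_of_le h1)
          have hy : K - L < 0 := sub_neg.2 (h2.lt_of_ne hKL)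
          exact div_pos_of_neg_of_neg hx hy
      obtain ⟨i, j, hi, hj, hbnd⟩ := seq (fun _ => Real.log ((R - K) / (K - L)))
      refine ⟨i, j, hi, hj, ?_⟩
      have hμt := hconst (Real.log ((R - K) / (K - L))) i j hbnd
      have h := slope_tendsto a b ha hb f R L hR hL i j hi hj _ hμt
      have hKL' : K - L ≠ 0 := sub_ne_zero.2 hKL
      have hRL' : R - L ≠ 0 := sub_ne_zero.2 hRL
      have hsum : 1 + (R - K) / (K - L) = (R - L) / (K - L) := by
        field_simp
        ring
      have heq : 1 / (1 + Real.exp (Real.log ((R - K) / (K - L)))) * R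
          + (1 - 1 / (1 + Real.exp (Real.log ((R - K) / (K - L))))) * L = K := by
        rw [Real.exp_log ht0, hsum, one_div_div]
        field_simp
        ring
      rwa [heq] at h
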